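/- Let C and D be split chain complexes and let f : C → D be a chain map. Then f is a chain homotopy equivalence if and only if both restrictions f|_{C^ℓ} : C^ℓ → D^ℓ and f|_{C^u} : C^u → D^u are chain homotopy equivalences. -/

import Mathlib

open CategoryTheory Limits

variable {R : Type} [Ring R]

/-- Admissibility: bounded between 0 and n, finitely generated free in each degree. -/
def IsAdmissible (n : ℕ) (C : ChainComplex (ModuleCat R) ℕ) : Prop :=
  (∀ i, n < i → IsZero (C.X i)) ∧
    (∀ i, Module.Finite R (C.X i)) ∧ (∀ i, Module.Free R (C.X i))

/-- The lower half `C^ℓ` of a chain complex. -/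
noncomputable def lowerHalf (n : ℕ) (C : ChainComplex (ModuleCat R) ℕ) :
    ChainComplex (ModuleCat R) ℕ :=
  ChainComplex.of
    (fun i => if 2 * i < n then C.X i else ModuleCat.of R PUnit)
    (fun i =>
      if h : 2 * (i + 1) < n then
        eqToHom (if_pos h) ≫ C.d (i + 1) i ≫ eqToHom (if_pos (by omega : 2 * i < n)).symm
      else 0)
    (fun i => by
      by_cases h : 2 * (i + 1 + 1) < n
      · simp only [dif_pos h, dif_pos (show 2 * (i + 1) < n by omega)]
        simp
      · simp only [dif_neg h, zero_comp])

/-- The upper half `C^u` of a chain complex. -/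
noncomputable def upperHalf (n : ℕ) (C : ChainComplex (ModuleCat R) ℕ) :
    ChainComplex (ModuleCat R) ℕ :=
  ChainComplex.of
    (fun i => if n < 2 * i then C.X i else ModuleCat.of R PUnit)
    (fun i =>
      if h : n < 2 * i then
        eqToHom (if_pos (by omega : n < 2 * (i + 1))) ≫ C.d (i + 1) i ≫ eqToHom (if_pos h).symm
      else 0)
    (fun i => by
      by_cases h : n < 2 * i
      · simp only [dif_pos h, dif_pos (show n < 2 * (i + 1) by omega)]
        simp
      · simp only [dif_neg h, comp_zero])

/-- A chain complex splits if `C_{n/2} = 0` (n even) or `d_{⌈n/2⌉} = 0` (n odd). -/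
def Splits (n : ℕ) (C : ChainComplex (ModuleCat R) ℕ) : Prop :=
  if Even n then IsZero (C.X (n / 2)) else C.d (n / 2 + 1) (n / 2) = 0

/-- The restriction of a chain map to the lower halves. -/
noncomputable def lowerMap (n : ℕ) {C D : ChainComplex (ModuleCat R) ℕ} (f : C ⟶ D) :
    lowerHalf n C ⟶ lowerHalf n D where
  f i :=
    if h : 2 * i < n then
      eqToHom (if_pos h) ≫ f.f i ≫ eqToHom (if_pos h).symm
    else 0
  comm' := by
    rintro i j (rfl : j + 1 = i)
    show _ ≫ (lowerHalf n D).d (j + 1) j = (lowerHalf n C).d (j + 1) j ≫ _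
    simp only [lowerHalf, ChainComplex.of_d]
    by_cases h : 2 * (j + 1) < n
    · simp only [dif_pos h, dif_pos (show 2 * j < n by omega)]
      simp [h, (show 2 * j < n by omega)]
    · simp only [dif_neg h, zero_comp, comp_zero]

/-- The restriction of a chain map to the upper halves. -/
noncomputable def upperMap (n : ℕ) {C D : ChainComplex (ModuleCat R) ℕ} (f : C ⟶ D) :
    upperHalf n C ⟶ upperHalf n D where
  f i :=
    if h : n < 2 * i then
      eqToHom (if_pos h) ≫ f.f i ≫ eqToHom (if_pos h).symm
    else 0
  comm' := by
    rintro i j (rfl : j + 1 = i)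
    show _ ≫ (upperHalf n D).d (j + 1) j = (upperHalf n C).d (j + 1) j ≫ _
    simp only [upperHalf, ChainComplex.of_d]
    by_cases h : n < 2 * j
    · simp only [dif_pos h, dif_pos (show n < 2 * (j + 1) by omega)]
      simp [h, (show n < 2 * (j + 1) by omega)]
    · simp only [dif_neg h, zero_comp, comp_zero]

section Aux

variable (n : ℕ)

lemma lowerHalf_X_isZero {C : ChainComplex (ModuleCat R) ℕ} {i : ℕ} (h : ¬ 2 * i < n) :
    IsZero ((lowerHalf n C).X i) :=
  (ModuleCat.isZero_of_subsingleton (ModuleCat.of R PUnit)).of_iso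
    (eqToIso (if_neg h : (if 2 * i < n then C.X i else ModuleCat.of R PUnit) = _))

lemma upperHalf_X_isZero {C : ChainComplex (ModuleCat R) ℕ} {i : ℕ} (h : ¬ n < 2 * i) :
    IsZero ((upperHalf n C).X i) :=
  (ModuleCat.isZero_of_subsingleton (ModuleCat.of R PUnit)).of_iso
    (eqToIso (if_neg h : (if n < 2 * i then C.X i else ModuleCat.of R PUnit) = _))

/-- Inclusion of the lower half. -/
noncomputable def lowerIncl (C : ChainComplex (ModuleCat R) ℕ) : lowerHalf n C ⟶ C where
  f i := if h : 2 * i < n then eqToHom (if_pos h) else 0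
  comm' := by
    rintro i j (rfl : j + 1 = i)
    show _ ≫ C.d (j + 1) j = (lowerHalf n C).d (j + 1) j ≫ _
    simp only [lowerHalf, ChainComplex.of_d]
    by_cases h : 2 * (j + 1) < n
    · simp only [dif_pos h, dif_pos (show 2 * j < n by omega)]
      simp [h, (show 2 * j < n by omega)]
    · simp only [dif_neg h]
      exact (lowerHalf_X_isZero n h).eq_of_src _ _

/-- Projection onto the lower half (needs the splitting). -/
noncomputable def lowerProj (C : ChainComplex (ModuleCat R) ℕ) (hC : Splits n C) :
    C ⟶ lowerHalf n C where
  f i := if h : 2 * i < n then eqToHom (if_pos h).symm else 0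
  comm' := by
    rintro i j (rfl : j + 1 = i)
    show _ ≫ (lowerHalf n C).d (j + 1) j = C.d (j + 1) j ≫ _
    simp only [lowerHalf, ChainComplex.of_d]
    by_cases h : 2 * (j + 1) < n
    · simp only [dif_pos h, dif_pos (show 2 * j < n by omega)]
      simp [h, (show 2 * j < n by omega)]
    · simp only [dif_neg h, comp_zero]
      by_cases h' : 2 * j < n
      · skip
        -- here n = 2j+1 or n = 2j+2
        by_cases hev : Even n
        · have hmid : j + 1 = n / 2 := by
            obtain ⟨k, hk⟩ := hev; omega
          have hz : IsZero (C.X (j + 1)) := by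
            rw [hmid]; simpa [Splits, if_pos hev] using hC
          exact (hz.eq_of_src _ _).symm
        · have hmid : j = n / 2 := by
            rcases Nat.even_or_odd n with he | ⟨k, hk⟩
            · exact absurd he hev
            · omega
          have hd : C.d (j + 1) j = 0 := by
            rw [hmid]; simpa [Splits, if_neg hev] using hC
          rw [hd, zero_comp]
      · exact (lowerHalf_X_isZero n h').eq_of_tgt _ _

/-- Inclusion of the upper half (needs the splitting). -/
noncomputable def upperIncl (C : ChainComplex (ModuleCat R) ℕ) (hC : Splits n C) :
    upperHalf n C ⟶ C where
  f i := if h : n < 2 * i then eqToHom (if_pos h) else 0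
  comm' := by
    rintro i j (rfl : j + 1 = i)
    show _ ≫ C.d (j + 1) j = (upperHalf n C).d (j + 1) j ≫ _
    simp only [upperHalf, ChainComplex.of_d]
    by_cases h : n < 2 * j
    · simp only [dif_pos h, dif_pos (show n < 2 * (j + 1) by omega)]
      simp [h, (show n < 2 * (j + 1) by omega)]
    · simp only [dif_neg h, zero_comp, comp_zero]
      by_cases h' : n < 2 * (j + 1)
      · skip
        -- here n = 2j or n = 2j+1
        by_cases hev : Even n
        · have hmid : j = n / 2 := by
            obtain ⟨k, hk⟩ := hev; omega
          have hz : IsZero (C.X j) := by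
            rw [hmid]; simpa [Splits, if_pos hev] using hC
          exact hz.eq_of_tgt _ _
        · have hmid : j = n / 2 := by
            rcases Nat.even_or_odd n with he | ⟨k, hk⟩
            · exact absurd he hev
            · omega
          have hd : C.d (j + 1) j = 0 := by
            rw [hmid]; simpa [Splits, if_neg hev] using hC
          rw [hd, comp_zero]
      · exact (upperHalf_X_isZero n h').eq_of_src _ _

/-- Projection onto the upper half. -/
noncomputable def upperProj (C : ChainComplex (ModuleCat R) ℕ) : C ⟶ upperHalf n C where
  f i := if h : n < 2 * i then eqToHom (if_pos h).symm else 0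
  comm' := by
    rintro i j (rfl : j + 1 = i)
    show _ ≫ (upperHalf n C).d (j + 1) j = C.d (j + 1) j ≫ _
    simp only [upperHalf, ChainComplex.of_d]
    by_cases h : n < 2 * j
    · simp only [dif_pos h, dif_pos (show n < 2 * (j + 1) by omega)]
      simp [h, (show n < 2 * (j + 1) by omega)]
    · exact (upperHalf_X_isZero n h).eq_of_tgt _ _

lemma lowerIncl_proj (C : ChainComplex (ModuleCat R) ℕ) (hC : Splits n C) :
    lowerIncl n C ≫ lowerProj n C hC = 𝟙 (lowerHalf n C) := by
  apply HomologicalComplex.Hom.ext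
  funext i
  simp only [HomologicalComplex.comp_f, HomologicalComplex.id_f, lowerIncl, lowerProj]
  by_cases h : 2 * i < n
  · simp [h, lowerHalf, upperHalf]
  · simp only [dif_neg h, zero_comp]
    exact ((lowerHalf_X_isZero n h).eq_of_src _ _).symm

lemma upperIncl_proj (C : ChainComplex (ModuleCat R) ℕ) (hC : Splits n C) :
    upperIncl n C hC ≫ upperProj n C = 𝟙 (upperHalf n C) := by
  apply HomologicalComplex.Hom.ext
  funext i
  simp only [HomologicalComplex.comp_f, HomologicalComplex.id_f, upperIncl, upperProj]
  by_cases h : n < 2 * i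
  · simp [h, lowerHalf, upperHalf]
  · simp only [dif_neg h, zero_comp]
    exact ((upperHalf_X_isZero n h).eq_of_src _ _).symm

lemma proj_incl_decomp (C : ChainComplex (ModuleCat R) ℕ) (hC : Splits n C) :
    lowerProj n C hC ≫ lowerIncl n C + upperProj n C ≫ upperIncl n C hC = 𝟙 C := by
  apply HomologicalComplex.Hom.ext
  funext i
  simp only [HomologicalComplex.add_f_apply, HomologicalComplex.comp_f,
    HomologicalComplex.id_f, lowerIncl, lowerProj, upperIncl, upperProj]
  by_cases h : 2 * i < n
  · simp [h, (show ¬ n < 2 * i by omega), lowerHalf]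
  · by_cases h' : n < 2 * i
    · simp [h, h', upperHalf]
    · simp only [dif_neg h, dif_neg h', zero_comp, comp_zero, add_zero]
      have hz : IsZero (C.X i) := by
        have hev : Even n := ⟨i, by omega⟩
        have hmid : i = n / 2 := by obtain ⟨k, hk⟩ := hev; omega
        rw [hmid]; simpa [Splits, if_pos hev] using hC
      exact (hz.eq_of_src _ _).symm

lemma lowerMap_comp_conj {C D : ChainComplex (ModuleCat R) ℕ} (f : C ⟶ D) (g : D ⟶ C)
    (hC : Splits n C) :
    lowerMap n f ≫ (lowerIncl n D ≫ g ≫ lowerProj n C hC) =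
      lowerIncl n C ≫ (f ≫ g) ≫ lowerProj n C hC := by
  apply HomologicalComplex.Hom.ext
  funext i
  simp only [HomologicalComplex.comp_f, lowerMap, lowerIncl, lowerProj]
  by_cases h : 2 * i < n
  · simp [h, lowerHalf, upperHalf]
  · simp [h]

lemma conj_comp_lowerMap {C D : ChainComplex (ModuleCat R) ℕ} (f : C ⟶ D) (g : D ⟶ C)
    (hC : Splits n C) (hD : Splits n D) :
    (lowerIncl n D ≫ g ≫ lowerProj n C hC) ≫ lowerMap n f =
      lowerIncl n D ≫ (g ≫ f) ≫ lowerProj n D hD := by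
  apply HomologicalComplex.Hom.ext
  funext i
  simp only [HomologicalComplex.comp_f, lowerMap, lowerIncl, lowerProj]
  by_cases h : 2 * i < n
  · simp [h, lowerHalf, upperHalf]
  · simp [h]

lemma upperMap_comp_conj {C D : ChainComplex (ModuleCat R) ℕ} (f : C ⟶ D) (g : D ⟶ C)
    (hC : Splits n C) (hD : Splits n D) :
    upperMap n f ≫ (upperIncl n D hD ≫ g ≫ upperProj n C) =
      upperIncl n C hC ≫ (f ≫ g) ≫ upperProj n C := by
  apply HomologicalComplex.Hom.ext
  funext i
  simp only [HomologicalComplex.comp_f, upperMap, upperIncl, upperProj]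
  by_cases h : n < 2 * i
  · simp [h, lowerHalf, upperHalf]
  · simp [h]

lemma conj_comp_upperMap {C D : ChainComplex (ModuleCat R) ℕ} (f : C ⟶ D) (g : D ⟶ C)
    (hC : Splits n C) (hD : Splits n D) :
    (upperIncl n D hD ≫ g ≫ upperProj n C) ≫ upperMap n f =
      upperIncl n D hD ≫ (g ≫ f) ≫ upperProj n D := by
  apply HomologicalComplex.Hom.ext
  funext i
  simp only [HomologicalComplex.comp_f, upperMap, upperIncl, upperProj]
  by_cases h : n < 2 * i
  · simp [h, lowerHalf, upperHalf]
  · simp [h]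

lemma comp_lowerProj {C D : ChainComplex (ModuleCat R) ℕ} (f : C ⟶ D)
    (hC : Splits n C) (hD : Splits n D) :
    f ≫ lowerProj n D hD = lowerProj n C hC ≫ lowerMap n f := by
  apply HomologicalComplex.Hom.ext
  funext i
  simp only [HomologicalComplex.comp_f, lowerMap, lowerProj]
  by_cases h : 2 * i < n
  · simp [h, lowerHalf, upperHalf]
  · simp [h]

lemma comp_upperProj {C D : ChainComplex (ModuleCat R) ℕ} (f : C ⟶ D) :
    f ≫ upperProj n D = upperProj n C ≫ upperMap n f := by
  apply HomologicalComplex.Hom.ext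
  funext i
  simp only [HomologicalComplex.comp_f, upperMap, upperProj]
  by_cases h : n < 2 * i
  · simp [h, lowerHalf, upperHalf]
  · simp [h]

lemma lowerIncl_comp {C D : ChainComplex (ModuleCat R) ℕ} (f : C ⟶ D) :
    lowerIncl n C ≫ f = lowerMap n f ≫ lowerIncl n D := by
  apply HomologicalComplex.Hom.ext
  funext i
  simp only [HomologicalComplex.comp_f, lowerMap, lowerIncl]
  by_cases h : 2 * i < n
  · simp [h, lowerHalf, upperHalf]
  · simp [h]

lemma upperIncl_comp {C D : ChainComplex (ModuleCat R) ℕ} (f : C ⟶ D)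
    (hC : Splits n C) (hD : Splits n D) :
    upperIncl n C hC ≫ f = upperMap n f ≫ upperIncl n D hD := by
  apply HomologicalComplex.Hom.ext
  funext i
  simp only [HomologicalComplex.comp_f, upperMap, upperIncl]
  by_cases h : n < 2 * i
  · simp [h, lowerHalf, upperHalf]
  · simp [h]

end Aux

/-- A chain map is a chain homotopy equivalence if it is the underlying map of a homotopy
equivalence, i.e. it admits a chain-homotopy inverse. -/
def IsChainHtpyEquiv {C D : ChainComplex (ModuleCat R) ℕ} (f : C ⟶ D) : Prop :=
  ∃ e : HomotopyEquiv C D, e.hom = f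

/-- For split chain complexes `C` and `D`, a chain map `f : C ⟶ D` is a chain
homotopy equivalence if and only if both of its restrictions to the lower and upper halves are
chain homotopy equivalences. -/
theorem split_chainMap_homotopyEquiv_iff (n : ℕ) (hn : 0 < n)
    (C D : ChainComplex (ModuleCat R) ℕ)
    (hCa : IsAdmissible n C) (hDa : IsAdmissible n D)
    (hC : Splits n C) (hD : Splits n D) (f : C ⟶ D) :
    IsChainHtpyEquiv f ↔
      IsChainHtpyEquiv (lowerMap n f) ∧ IsChainHtpyEquiv (upperMap n f) := by
  constructor
  · rintro ⟨e, rfl⟩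
    constructor
    · refine ⟨⟨lowerMap n e.hom, lowerIncl n D ≫ e.inv ≫ lowerProj n C hC, ?_, ?_⟩, rfl⟩
      · refine (Homotopy.ofEq ?_).trans
          (((e.homotopyHomInvId.compLeft (lowerIncl n C)).compRight
            (lowerProj n C hC)).trans (Homotopy.ofEq ?_))
        · rw [lowerMap_comp_conj n e.hom e.inv hC]
          simp only [Category.assoc]
        · simp [lowerIncl_proj n C hC]
      · refine (Homotopy.ofEq ?_).trans
          (((e.homotopyInvHomId.compLeft (lowerIncl n D)).compRight
            (lowerProj n D hD)).trans (Homotopy.ofEq ?_))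
        · rw [conj_comp_lowerMap n e.hom e.inv hC hD]
          simp only [Category.assoc]
        · simp [lowerIncl_proj n D hD]
    · refine ⟨⟨upperMap n e.hom, upperIncl n D hD ≫ e.inv ≫ upperProj n C, ?_, ?_⟩, rfl⟩
      · refine (Homotopy.ofEq ?_).trans
          (((e.homotopyHomInvId.compLeft (upperIncl n C hC)).compRight
            (upperProj n C)).trans (Homotopy.ofEq ?_))
        · rw [upperMap_comp_conj n e.hom e.inv hC hD]
          simp only [Category.assoc]
        · simp [upperIncl_proj n C hC]
      · refine (Homotopy.ofEq ?_).trans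
          (((e.homotopyInvHomId.compLeft (upperIncl n D hD)).compRight
            (upperProj n D)).trans (Homotopy.ofEq ?_))
        · rw [conj_comp_upperMap n e.hom e.inv hC hD]
          simp only [Category.assoc]
        · simp [upperIncl_proj n D hD]
  · rintro ⟨⟨el, hel⟩, ⟨eu, heu⟩⟩
    have Hl := el.homotopyHomInvId
    have Hl' := el.homotopyInvHomId
    have Hu := eu.homotopyHomInvId
    have Hu' := eu.homotopyInvHomId
    rw [hel] at Hl Hl'
    rw [heu] at Hu Hu'
    refine ⟨⟨f, lowerProj n D hD ≫ el.inv ≫ lowerIncl n C +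
      upperProj n D ≫ eu.inv ≫ upperIncl n C hC, ?_, ?_⟩, rfl⟩
    · refine (Homotopy.ofEq ?_).trans
        ((((Hl.compLeft (lowerProj n C hC)).compRight (lowerIncl n C)).add
          ((Hu.compLeft (upperProj n C)).compRight (upperIncl n C hC))).trans
          (Homotopy.ofEq ?_))
      · simp only [Preadditive.comp_add, Category.assoc,
          reassoc_of% (comp_lowerProj n f hC hD), reassoc_of% (comp_upperProj n f)]
      · simp only [Category.comp_id]
        exact proj_incl_decomp n C hC
    · refine (Homotopy.ofEq ?_).trans
        ((((Hl'.compLeft (lowerProj n D hD)).compRight (lowerIncl n D)).add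
          ((Hu'.compLeft (upperProj n D)).compRight (upperIncl n D hD))).trans
          (Homotopy.ofEq ?_))
      · simp only [Preadditive.add_comp, Category.assoc,
          lowerIncl_comp n f, upperIncl_comp n f hC hD]
      · simp only [Category.comp_id]
        exact proj_incl_decomp n D hD
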